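/- Let q = p^K be a prime power, let L be an integer with (3/4)K ≤ L < K, and let 0 < ε < 1/4. Let P(X) = P₁(X) + P₂(X) ∈ 𝔽_q[X] be nonzero with deg(P₁) ≤ q^{1/2+ε}, deg(P₂) ≤ q^{L/K} + q^{1/2+ε} − 1 < q, and every nonzero monomial of P₂ having degree at least p^L = q^{L/K}. Then P has at most q^{3/4+ε} roots in 𝔽_q. -/
import Mathlib

open Polynomial

/-- Lacunary polynomial root bound: let `q = p^K`, `(3/4)K ≤ L < K`, `0 < ε < 1/4`,
and `P = P₁ + P₂ ∈ 𝔽_q[X]` nonzero with `deg P₁ ≤ q^{1/2+ε}`,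
`deg P₂ ≤ q^{L/K} + q^{1/2+ε} − 1 < q` (note `q^{L/K} = p^L`), and every nonzero
monomial of `P₂` of degree at least `p^L`. Then `P` has at most `q^{3/4+ε}` roots. -/
theorem stmt_15 (p K L : ℕ) (hp : p.Prime) (hKL : 3 * K ≤ 4 * L) (hLK : L < K)
    (ε : ℝ) (hε : 0 < ε) (hε' : ε < 1 / 4)
    (F : Type*) [Field F] [Fintype F] (hF : Fintype.card F = p ^ K)
    (P₁ P₂ : Polynomial F) (hP : P₁ + P₂ ≠ 0)
    (h1 : (P₁.natDegree : ℝ) ≤ ((p : ℝ) ^ K) ^ ((1 : ℝ) / 2 + ε))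
    (h2 : (P₂.natDegree : ℝ) ≤ (p : ℝ) ^ L + ((p : ℝ) ^ K) ^ ((1 : ℝ) / 2 + ε) - 1)
    (h2' : (p : ℝ) ^ L + ((p : ℝ) ^ K) ^ ((1 : ℝ) / 2 + ε) - 1 < (p : ℝ) ^ K)
    (hmin : ∀ i < p ^ L, P₂.coeff i = 0) :
    ({x : F | Polynomial.eval x (P₁ + P₂) = 0}.ncard : ℝ) ≤
      ((p : ℝ) ^ K) ^ ((3 : ℝ) / 4 + ε) := by
  classical
  have hp1 : 1 < p := hp.one_lt
  have hK1 : 0 < K := by omega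
  have hL1 : 0 < L := by omega
  set c : ℕ := p ^ (K - L) with hc
  set qn : ℕ := p ^ K with hqn
  have hcpos : 0 < c := pow_pos (by omega) _
  have hc1 : 1 ≤ c := hcpos
  have hq2 : 2 ≤ qn := by
    calc 2 ≤ p := hp1
    _ = p ^ 1 := (pow_one p).symm
    _ ≤ p ^ K := Nat.pow_le_pow_right (by omega) hK1
  have hLc : p ^ L * c = qn := by rw [hc, hqn, ← pow_add]; congr 1; omega
  -- characteristic
  haveI : Fact p.Prime := ⟨hp⟩
  obtain ⟨n, hrp, hcard⟩ := FiniteField.card F (ringChar F)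
  have hpr : ringChar F = p := by
    have hdvd : p ∣ ringChar F ^ (n : ℕ) := by
      rw [← hcard, hF]; exact dvd_pow_self p hK1.ne'
    exact ((Nat.prime_dvd_prime_iff_eq hp hrp).mp (hp.dvd_of_dvd_pow hdvd)).symm
  haveI : CharP F p := hpr ▸ ringChar.charP F
  haveI : ExpChar F p := .prime hp
  -- the polynomial P
  set P : Polynomial F := P₁ + P₂ with hPdef
  -- the exponent transformation
  set e : ℕ → ℕ := fun i => if i < p ^ L then i * c else i * c - (qn - 1) with he
  have hqe : ∀ i, p ^ L ≤ i → qn ≤ i * c := fun i hi => by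
    calc qn = p ^ L * c := hLc.symm
    _ ≤ i * c := Nat.mul_le_mul_right c hi
  have hpc : p ∣ c := dvd_pow_self p (by omega)
  have hpq : p ∣ qn := dvd_pow_self p hK1.ne'
  have einj : ∀ i j, e i = e j → i = j := by
    have key : ∀ i j, i < p ^ L → p ^ L ≤ j → e i ≠ e j := by
      intro i j hi hj hij
      simp only [he, if_pos hi, if_neg (not_lt.2 hj)] at hij
      have hjq := hqe j hj
      have hd1 : p ∣ qn - 1 := by
        have hsub : qn - 1 = j * c - i * c := by omega
        rw [hsub]
        exact Nat.dvd_sub (Dvd.dvd.mul_left hpc j) (Dvd.dvd.mul_left hpc i)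
      have hd2 : p ∣ 1 := by
        have := Nat.dvd_sub hpq hd1
        have h1' : qn - (qn - 1) = 1 := by omega
        rwa [h1'] at this
      have := Nat.le_of_dvd one_pos hd2
      omega
    intro i j hij
    rcases lt_or_ge i (p ^ L) with hi | hi <;> rcases lt_or_ge j (p ^ L) with hj | hj
    · simp only [he, if_pos hi, if_pos hj] at hij
      exact Nat.eq_of_mul_eq_mul_right hcpos hij
    · exact absurd hij (key i j hi hj)
    · exact absurd hij.symm (key j i hj hi)
    · simp only [he, if_neg (not_lt.2 hi), if_neg (not_lt.2 hj)] at hij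
      have h1' := hqe i hi
      have h2' := hqe j hj
      have : i * c = j * c := by omega
      exact Nat.eq_of_mul_eq_mul_right hcpos this
  -- real exponent bookkeeping
  have hp0 : (0 : ℝ) < p := by exact_mod_cast hp.pos
  have hp1' : (1 : ℝ) < p := by exact_mod_cast hp1
  have hrw : ∀ x : ℝ, ((p : ℝ) ^ K) ^ x = (p : ℝ) ^ ((K : ℝ) * x) := fun x => by
    rw [← Real.rpow_natCast (p : ℝ) K, ← Real.rpow_mul hp0.le]
  have hDlt : ((p : ℝ) ^ K) ^ ((1 : ℝ) / 2 + ε) < (p : ℝ) ^ L := by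
    rw [hrw]
    have h3 : (3 : ℝ) * K ≤ 4 * L := by exact_mod_cast hKL
    have h4 : (0 : ℝ) < K := by exact_mod_cast hK1
    calc (p : ℝ) ^ ((K : ℝ) * (1 / 2 + ε)) < (p : ℝ) ^ ((L : ℕ) : ℝ) := by
          apply Real.rpow_lt_rpow_of_exponent_lt hp1'
          nlinarith
    _ = (p : ℝ) ^ L := Real.rpow_natCast _ _
  have hd1lt : P₁.natDegree < p ^ L := by
    have := lt_of_le_of_lt h1 hDlt
    exact_mod_cast this
  -- coefficients of P
  have hcoeff_lo : ∀ i, i < p ^ L → P.coeff i = P₁.coeff i := fun i hi => by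
    rw [hPdef, coeff_add, hmin i hi, add_zero]
  have hcoeff_hi : ∀ i, p ^ L ≤ i → P.coeff i = P₂.coeff i := fun i hi => by
    rw [hPdef, coeff_add,
      Polynomial.coeff_eq_zero_of_natDegree_lt (lt_of_lt_of_le hd1lt hi), zero_add]
  -- the auxiliary polynomial R
  set R : Polynomial F := ∑ i ∈ P.support, Polynomial.C (P.coeff i ^ p ^ (K - L)) *
      Polynomial.X ^ e i with hR
  have hd : P.natDegree ∈ P.support := Polynomial.natDegree_mem_support_of_nonzero hP
  have hRd : R.coeff (e P.natDegree) = P.coeff P.natDegree ^ p ^ (K - L) := by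
    rw [hR, Polynomial.finset_sum_coeff, Finset.sum_eq_single P.natDegree]
    · rw [Polynomial.coeff_C_mul, Polynomial.coeff_X_pow, if_pos rfl, mul_one]
    · intro b _ hbne
      rw [Polynomial.coeff_C_mul, Polynomial.coeff_X_pow, if_neg, mul_zero]
      exact fun h => hbne (einj _ _ h).symm
    · intro h; exact absurd hd h
  have hRcoeff : R.coeff (e P.natDegree) ≠ 0 := by
    rw [hRd]
    exact pow_ne_zero _ (Polynomial.mem_support_iff.mp hd)
  have hR0 : R ≠ 0 := fun h => hRcoeff (by simp [h])
  -- every root of P is a root of R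
  have hroots : ∀ x : F, Polynomial.eval x P = 0 → Polynomial.eval x R = 0 := by
    intro x hx
    have hev : Polynomial.eval x R =
        ∑ i ∈ P.support, P.coeff i ^ p ^ (K - L) * x ^ e i := by
      rw [hR, Polynomial.eval_finset_sum]; simp
    by_cases hx0 : x = 0
    · subst hx0
      rw [hev]
      apply Finset.sum_eq_zero
      intro i hi
      have hine : i ≠ 0 := by
        intro h; subst h
        exact Polynomial.mem_support_iff.mp hi
          (by rw [Polynomial.coeff_zero_eq_eval_zero]; exact hx)
      have hei : e i ≠ 0 := by
        simp only [he]
        split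
        · intro h
          rcases Nat.mul_eq_zero.mp h with h' | h'
          · exact hine h'
          · omega
        · have := hqe i (le_of_not_gt (by assumption))
          omega
      rw [zero_pow hei, mul_zero]
    · have hx1 : x ^ (qn - 1) = 1 := by
        have := FiniteField.pow_card_sub_one_eq_one x hx0
        rwa [hF] at this
      have hxe : ∀ i, x ^ e i = x ^ (i * c) := by
        intro i
        simp only [he]
        split
        · rfl
        · have hiq := hqe i (le_of_not_gt (by assumption))
          have hsplit : i * c = (i * c - (qn - 1)) + (qn - 1) := by omega
          conv_rhs => rw [hsplit]
          rw [pow_add, hx1, mul_one]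
      rw [hev]
      calc ∑ i ∈ P.support, P.coeff i ^ p ^ (K - L) * x ^ e i
          = ∑ i ∈ P.support, (P.coeff i * x ^ i) ^ p ^ (K - L) := by
            apply Finset.sum_congr rfl
            intro i _
            rw [hxe i, mul_pow, ← pow_mul]
        _ = (∑ i ∈ P.support, P.coeff i * x ^ i) ^ p ^ (K - L) :=
            (sum_pow_char_pow _ _ _ _).symm
        _ = (Polynomial.eval x P) ^ p ^ (K - L) := by
            rw [Polynomial.eval_eq_sum, Polynomial.sum_def]
        _ = 0 := by rw [hx, zero_pow (pow_ne_zero _ (by omega))]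
  -- degree bound for R
  set M : ℕ := max (P₁.natDegree * c) (P₂.natDegree * c - (qn - 1)) with hM
  have hdegR : R.natDegree ≤ M := by
    rw [hR]
    apply Polynomial.natDegree_sum_le_of_forall_le
    intro i hi
    refine le_trans (Polynomial.natDegree_C_mul_le _ _) ?_
    rw [Polynomial.natDegree_X_pow]
    simp only [he]
    split
    · have hle : i ≤ P₁.natDegree := by
        apply Polynomial.le_natDegree_of_ne_zero
        rw [← hcoeff_lo i (by assumption)]
        exact Polynomial.mem_support_iff.mp hi
      exact le_max_of_le_left (Nat.mul_le_mul_right c hle)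
    · have hle : i ≤ P₂.natDegree := by
        apply Polynomial.le_natDegree_of_ne_zero
        rw [← hcoeff_hi i (le_of_not_gt (by assumption))]
        exact Polynomial.mem_support_iff.mp hi
      exact le_max_of_le_right (Nat.sub_le_sub_right (Nat.mul_le_mul_right c hle) _)
  -- counting
  have hsub : {x : F | Polynomial.eval x P = 0} ⊆ (R.roots.toFinset : Set F) := by
    intro x hx
    simp only [Set.mem_setOf_eq] at hx
    simp only [Finset.coe_sort_coe, Multiset.mem_toFinset, Finset.mem_coe]
    rw [Polynomial.mem_roots hR0]
    exact hroots x hx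
  have hcount : {x : F | Polynomial.eval x P = 0}.ncard ≤ M := by
    calc {x : F | Polynomial.eval x P = 0}.ncard
        ≤ (R.roots.toFinset : Set F).ncard :=
          Set.ncard_le_ncard hsub (R.roots.toFinset.finite_toSet)
      _ = R.roots.toFinset.card := Set.ncard_coe_finset _
      _ ≤ Multiset.card R.roots := R.roots.toFinset_card_le
      _ ≤ R.natDegree := Polynomial.card_roots' R
      _ ≤ M := hdegR
  -- real bound for M
  set D : ℝ := ((p : ℝ) ^ K) ^ ((1 : ℝ) / 2 + ε) with hD
  have hD0 : 0 < D := by positivity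
  have hcR : ((c : ℕ) : ℝ) = (p : ℝ) ^ (K - L) := by push_cast [hc]; ring
  have hcR1 : (1 : ℝ) ≤ (c : ℝ) := by exact_mod_cast hc1
  have hqR : ((qn : ℕ) : ℝ) = (p : ℝ) ^ K := by push_cast [hqn]; ring
  have hpLc : ((p : ℝ) ^ L) * (c : ℝ) = (p : ℝ) ^ K := by
    have h := congrArg (fun n : ℕ => (n : ℝ)) hLc
    push_cast at h
    rw [hqR] at h
    exact h
  have hMbound : (M : ℝ) ≤ D * (c : ℝ) := by
    rw [hM]
    push_cast [Nat.cast_max]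
    apply max_le
    · exact mul_le_mul_of_nonneg_right h1 (by positivity)
    · rcases le_or_gt (P₂.natDegree * c) (qn - 1) with hcase | hcase
      · rw [Nat.sub_eq_zero_of_le hcase, Nat.cast_zero]
        positivity
      · rw [Nat.cast_sub hcase.le]
        have hq1 : ((qn - 1 : ℕ) : ℝ) = (p : ℝ) ^ K - 1 := by
          rw [Nat.cast_sub (by omega), hqR]; norm_num
        rw [hq1]
        push_cast
        have hd2 : (P₂.natDegree : ℝ) ≤ (p : ℝ) ^ L + D - 1 := h2
        nlinarith [mul_le_mul_of_nonneg_right hd2 (by positivity : (0:ℝ) ≤ (c:ℝ))]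
  -- assemble
  have hcq : (c : ℝ) ≤ ((p : ℝ) ^ K) ^ ((1 : ℝ) / 4) := by
    rw [hcR, hrw]
    calc (p : ℝ) ^ (K - L) = (p : ℝ) ^ (((K - L : ℕ) : ℕ) : ℝ) := (Real.rpow_natCast _ _).symm
      _ ≤ (p : ℝ) ^ ((K : ℝ) * (1 / 4)) := by
          apply Real.rpow_le_rpow_of_exponent_le hp1'.le
          rw [Nat.cast_sub hLK.le]
          have h3 : (3 : ℝ) * K ≤ 4 * L := by exact_mod_cast hKL
          linarith
  have hfinal : D * (c : ℝ) ≤ ((p : ℝ) ^ K) ^ ((3 : ℝ) / 4 + ε) := by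
    calc D * (c : ℝ) ≤ D * ((p : ℝ) ^ K) ^ ((1 : ℝ) / 4) :=
          mul_le_mul_of_nonneg_left hcq hD0.le
      _ = ((p : ℝ) ^ K) ^ ((3 : ℝ) / 4 + ε) := by
          rw [hD, hrw, hrw, hrw, ← Real.rpow_add hp0]
          congr 1
          ring
  calc ({x : F | Polynomial.eval x P = 0}.ncard : ℝ) ≤ (M : ℝ) := by exact_mod_cast hcount
    _ ≤ D * (c : ℝ) := hMbound
    _ ≤ ((p : ℝ) ^ K) ^ ((3 : ℝ) / 4 + ε) := hfinal
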